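/- arXiv:2501.16837 — 3 statements merged into one kernel-verified Lean document; each statement's English description precedes it below -/
import Mathlib

section
/- Let (p_k)_{k≥1} be a probability distribution on the positive integers with generating function h(s) = Σ_{k≥1} s^k p_k. Suppose there exists p₀ > 0 with lim_{k→∞} k² p_k = p₀. Then there exists C > 0 such that for all sufficiently small u ∈ (0,1), 0 ≤ (1-u) - h(1-u) ≤ C·(1 + log(1/u))·u·(1-u). Consequently, for every ε ∈ (0,1), ∫_{1-ε}^{1} ds/|h(s) - s| = ∞. -/
open Real Set Filter

section auxstmt3
open MeasureTheory

lemma tailsq (K : ℕ) (hK : K ≠ 0) :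
    ∑' j : ℕ, (((j + (K+1) : ℕ) : ℝ) ^ 2)⁻¹ ≤ (K : ℝ)⁻¹ := by
  apply Real.tsum_le_of_sum_range_le (fun n => by positivity)
  intro n
  have h1 : ∑ i ∈ Finset.range n, (((i + (K+1) : ℕ) : ℝ) ^ 2)⁻¹
      = ∑ i ∈ Finset.Ioc K (K+n), ((i : ℝ) ^ 2)⁻¹ := by
    rw [← Finset.Ico_add_one_add_one_eq_Ioc, Finset.sum_Ico_eq_sum_range]
    have : K + n + 1 - (K+1) = n := by omega
    rw [this]
    refine Finset.sum_congr rfl fun i _ => by rw [show K + 1 + i = i + (K+1) by omega]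
  rw [h1]
  rcases Nat.eq_zero_or_pos n with hn | hn
  · simp [hn]
  · calc ∑ i ∈ Finset.Ioc K (K+n), ((i : ℝ) ^ 2)⁻¹ ≤ (K:ℝ)⁻¹ - ((K+n : ℕ):ℝ)⁻¹ :=
        sum_Ioc_inv_sq_le_sub hK (by omega)
    _ ≤ (K:ℝ)⁻¹ := by
        have : (0:ℝ) ≤ ((K+n:ℕ):ℝ)⁻¹ := by positivity
        linarith

lemma aux_main (p : ℕ → ℝ) (hp0 : p 0 = 0) (hpnn : ∀ k, 0 ≤ p k)
    (hsum : ∑' k, p k = 1)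
    (h : ℝ → ℝ) (hh : ∀ s, h s = ∑' k, s ^ k * p k)
    (M : ℝ) (hM1 : 1 ≤ M) (hMb : ∀ k : ℕ, ((k:ℝ))^2 * p k ≤ M) :
    ∀ u ∈ Set.Ioo (0:ℝ) (1/2),
      0 ≤ (1-u) - h (1-u) ∧
      (1-u) - h (1-u) ≤ (M*(2+Real.log 2)) * (1 + Real.log (1/u)) * u * (1-u) := by
  have hM0 : (0:ℝ) ≤ M := by linarith
  have hsp : Summable p := by
    by_contra hns
    rw [tsum_eq_zero_of_not_summable hns] at hsum
    norm_num at hsum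
  intro u hu
  obtain ⟨hu0, hu2⟩ := hu
  set s : ℝ := 1 - u with hs_def
  have hs0 : 0 < s := by simp only [hs_def]; linarith
  have hs1 : s < 1 := by simp only [hs_def]; linarith
  have hsg : Summable (fun k : ℕ => s ^ k * p k) := by
    apply Summable.of_nonneg_of_le (fun k => mul_nonneg (pow_nonneg hs0.le k) (hpnn k)) _ hsp
    intro k
    calc s ^ k * p k ≤ 1 * p k :=
          mul_le_mul_of_nonneg_right (pow_le_one₀ hs0.le hs1.le) (hpnn k)
      _ = p k := one_mul _
  have hsf : Summable (fun k : ℕ => s * p k) := hsp.mul_left s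
  have hD : s - h s = ∑' k : ℕ, (s * p k - s ^ k * p k) := by
    rw [hh, Summable.tsum_sub hsf hsg, tsum_mul_left, hsum, mul_one]
  set f : ℕ → ℝ := fun k => s * p k - s ^ k * p k with hf_def
  have hfnn : ∀ k, 0 ≤ f k := by
    intro k
    rcases Nat.eq_zero_or_pos k with hk | hk
    · simp [hf_def, hk, hp0]
    · have hle : s ^ k ≤ s := by
        calc s ^ k ≤ s ^ 1 := pow_le_pow_of_le_one hs0.le hs1.le hk
          _ = s := pow_one s
      simp only [hf_def]
      have := hpnn k
      nlinarith
  have hfs : Summable f := hsf.sub hsg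
  refine ⟨by rw [hD]; exact tsum_nonneg hfnn, ?_⟩
  set K : ℕ := ⌈1/u⌉₊ with hK_def
  have h1u : (2:ℝ) ≤ 1/u := by
    rw [le_div_iff₀ hu0]; linarith
  have hKge : (1:ℝ)/u ≤ K := Nat.le_ceil _
  have hK2 : (2:ℝ) ≤ K := le_trans h1u hKge
  have hK0 : K ≠ 0 := by
    intro hc
    rw [hc] at hK2; norm_num at hK2
  have hKpos : (0:ℝ) < K := by linarith
  have hKle : (K:ℝ) ≤ 2/u := by
    have h1 := Nat.ceil_lt_add_one (show (0:ℝ) ≤ 1/u by positivity)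
    have h2 : 1/u + 1 ≤ 2/u := by
      rw [div_add' _ _ _ (ne_of_gt hu0), div_le_div_iff_of_pos_right hu0]; linarith
    linarith
  have hKinv : (K:ℝ)⁻¹ ≤ u := by
    rw [inv_le_comm₀ hKpos hu0, ← one_div]
    exact hKge
  have hsplit := Summable.sum_add_tsum_nat_add (f := f) (K+1) hfs
  -- head bound
  have hhead : ∑ i ∈ Finset.range (K+1), f i ≤ s * u * M * (1 + Real.log K) := by
    rw [Finset.sum_range_succ' f K]
    have hf0 : f 0 = 0 := by simp [hf_def, hp0]
    rw [hf0, add_zero]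
    have hterm : ∀ i ∈ Finset.range K, f (i+1) ≤ (s * u * M) * ((i:ℝ)+1)⁻¹ := by
      intro i _
      have hBern : 1 - (i:ℝ) * u ≤ s ^ i := by
        have hb := one_add_mul_le_pow (show (-2:ℝ) ≤ -u by linarith) i
        have e : (1 + -u) = s := by rw [hs_def]; ring
        rw [e] at hb
        linarith
      have hip : ((i:ℝ)+1) ^ 2 * p (i+1) ≤ M := by
        have := hMb (i+1); push_cast at this; exact this
      have hppos := hpnn (i+1)
      have hipos : (0:ℝ) < (i:ℝ)+1 := by positivity
      have h6 : (i:ℝ) * p (i+1) ≤ M * ((i:ℝ)+1)⁻¹ := by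
        rw [← sub_nonneg]
        have e : M * ((i:ℝ)+1)⁻¹ - (i:ℝ) * p (i+1)
            = ((M - ((i:ℝ)+1)^2 * p (i+1)) + ((i:ℝ)+1) * p (i+1)) * ((i:ℝ)+1)⁻¹ := by
          field_simp; ring
        rw [e]
        apply mul_nonneg _ (by positivity)
        have : 0 ≤ ((i:ℝ)+1) * p (i+1) := mul_nonneg hipos.le hppos
        linarith
      have h5 : (1 - s ^ i) * p (i+1) ≤ ((i:ℝ) * u) * p (i+1) :=
        mul_le_mul_of_nonneg_right (by linarith) hppos
      have e2 : f (i+1) = s * ((1 - s ^ i) * p (i+1)) := by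
        simp only [hf_def]; ring
      rw [e2]
      calc s * ((1 - s ^ i) * p (i+1)) ≤ s * (((i:ℝ) * u) * p (i+1)) :=
            mul_le_mul_of_nonneg_left h5 hs0.le
        _ = s * u * ((i:ℝ) * p (i+1)) := by ring
        _ ≤ s * u * (M * ((i:ℝ)+1)⁻¹) :=
            mul_le_mul_of_nonneg_left h6 (mul_nonneg hs0.le hu0.le)
        _ = (s * u * M) * ((i:ℝ)+1)⁻¹ := by ring
    calc ∑ i ∈ Finset.range K, f (i+1) ≤ ∑ i ∈ Finset.range K, (s * u * M) * ((i:ℝ)+1)⁻¹ :=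
          Finset.sum_le_sum hterm
      _ = (s * u * M) * ∑ i ∈ Finset.range K, ((i:ℝ)+1)⁻¹ := by rw [Finset.mul_sum]
      _ = (s * u * M) * ((harmonic K : ℝ)) := by
          congr 1
          rw [harmonic]; push_cast; rfl
      _ ≤ (s * u * M) * (1 + Real.log K) := by
          apply mul_le_mul_of_nonneg_left (harmonic_le_one_add_log K)
          exact mul_nonneg (mul_nonneg hs0.le hu0.le) hM0
  -- tail bound
  have htail : ∑' j : ℕ, f (j + (K+1)) ≤ s * M * u := by
    have hstep : ∀ j : ℕ, f (j + (K+1)) ≤ (s*M) * (((j + (K+1) : ℕ):ℝ)^2)⁻¹ := by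
      intro j
      have h1 : f (j + (K+1)) ≤ s * p (j + (K+1)) := by
        simp only [hf_def]
        have : 0 ≤ s ^ (j + (K+1)) * p (j + (K+1)) :=
          mul_nonneg (pow_nonneg hs0.le _) (hpnn _)
        linarith
      have h2 : p (j + (K+1)) ≤ M * (((j + (K+1):ℕ):ℝ)^2)⁻¹ := by
        have hb := hMb (j + (K+1))
        have hpos : (0:ℝ) < ((j + (K+1):ℕ):ℝ)^2 := by positivity
        rw [← sub_nonneg]
        have e : M * (((j + (K+1):ℕ):ℝ)^2)⁻¹ - p (j + (K+1))
            = (M - ((j + (K+1):ℕ):ℝ)^2 * p (j + (K+1))) * (((j + (K+1):ℕ):ℝ)^2)⁻¹ := by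
          field_simp
        rw [e]
        exact mul_nonneg (by linarith) (by positivity)
      calc f (j + (K+1)) ≤ s * p (j + (K+1)) := h1
        _ ≤ s * (M * (((j + (K+1):ℕ):ℝ)^2)⁻¹) := mul_le_mul_of_nonneg_left h2 hs0.le
        _ = (s*M) * (((j + (K+1):ℕ):ℝ)^2)⁻¹ := by ring
    have hsq : Summable (fun j : ℕ => (((j + (K+1) : ℕ):ℝ)^2)⁻¹) := by
      have base : Summable (fun n : ℕ => ((n:ℝ)^2)⁻¹) := by
        have := (summable_one_div_nat_pow (p := 2)).mpr (by norm_num)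
        simpa [one_div] using this
      have := (summable_nat_add_iff (f := fun n : ℕ => ((n:ℝ)^2)⁻¹) (K+1)).mpr base
      simpa using this
    have htf : Summable (fun j : ℕ => f (j + (K+1))) := (summable_nat_add_iff (K+1)).mpr hfs
    calc ∑' j : ℕ, f (j + (K+1)) ≤ ∑' j : ℕ, (s*M) * (((j + (K+1):ℕ):ℝ)^2)⁻¹ :=
          Summable.tsum_le_tsum hstep htf (hsq.mul_left _)
      _ = (s*M) * ∑' j : ℕ, (((j + (K+1):ℕ):ℝ)^2)⁻¹ := tsum_mul_left
      _ ≤ (s*M) * (K:ℝ)⁻¹ := by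
          apply mul_le_mul_of_nonneg_left (tailsq K hK0) (mul_nonneg hs0.le hM0)
      _ ≤ s * M * u := mul_le_mul_of_nonneg_left hKinv (mul_nonneg hs0.le hM0)
  -- combine
  have hlogK : Real.log K ≤ Real.log 2 + Real.log (1/u) := by
    calc Real.log K ≤ Real.log (2/u) := Real.log_le_log hKpos (by rw [div_eq_mul_one_div] at hKle ⊢; linarith [hKle])
      _ = Real.log 2 + Real.log (1/u) := by
          rw [div_eq_mul_one_div, Real.log_mul (by norm_num) (by positivity)]
  have hL0 : 0 ≤ Real.log (1/u) := by
    apply Real.log_nonneg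
    rw [le_div_iff₀ hu0]; linarith
  have hD2 : s - h s ≤ s * u * M * (1 + Real.log K) + s * M * u := by
    rw [hD, ← hsplit]; exact add_le_add hhead htail
  have hlog2 : (0:ℝ) ≤ Real.log 2 := Real.log_nonneg (by norm_num)
  set L := Real.log (1/u)
  have key : s * u * M * (1 + Real.log K) + s * M * u ≤ (M*(2+Real.log 2)) * (1 + L) * u * s := by
    have hsuM : (0:ℝ) ≤ s * u * M := mul_nonneg (mul_nonneg hs0.le hu0.le) hM0
    have h1 : s * u * M * (1 + Real.log K) + s * M * u ≤ s * u * M * (2 + Real.log 2 + L) := by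
      have hstep : s * u * M * (1 + Real.log K) ≤ s * u * M * (1 + Real.log 2 + L) :=
        mul_le_mul_of_nonneg_left (by linarith) hsuM
      nlinarith
    have h2 : s * u * M * (2 + Real.log 2 + L) ≤ (M*(2+Real.log 2)) * (1 + L) * u * s := by
      have e : (M*(2+Real.log 2)) * (1 + L) * u * s - s * u * M * (2 + Real.log 2 + L)
          = (s * u * M) * ((1 + Real.log 2) * L) := by ring
      nlinarith [mul_nonneg hsuM (mul_nonneg (by linarith : (0:ℝ) ≤ 1 + Real.log 2) hL0)]
    linarith
  exact le_trans hD2 key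

lemma aux_pos (p : ℕ → ℝ) (hp0 : p 0 = 0) (hpnn : ∀ k, 0 ≤ p k)
    (hsum : ∑' k, p k = 1)
    (h : ℝ → ℝ) (hh : ∀ s, h s = ∑' k, s ^ k * p k)
    (k₀ : ℕ) (hk2 : 2 ≤ k₀) (hpk : 0 < p k₀) :
    ∀ x ∈ Set.Ioo (0:ℝ) 1, h x < x := by
  have hsp : Summable p := by
    by_contra hns
    rw [tsum_eq_zero_of_not_summable hns] at hsum
    norm_num at hsum
  intro x hx
  obtain ⟨hx0, hx1⟩ := hx
  have hsg : Summable (fun k : ℕ => x ^ k * p k) := by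
    apply Summable.of_nonneg_of_le (fun k => mul_nonneg (pow_nonneg hx0.le k) (hpnn k)) _ hsp
    intro k
    calc x ^ k * p k ≤ 1 * p k :=
          mul_le_mul_of_nonneg_right (pow_le_one₀ hx0.le hx1.le) (hpnn k)
      _ = p k := one_mul _
  have hsf : Summable (fun k : ℕ => x * p k) := hsp.mul_left x
  have hle : ∀ k : ℕ, x ^ k * p k ≤ x * p k := by
    intro k
    rcases Nat.eq_zero_or_pos k with hk | hk
    · simp [hk, hp0]
    · apply mul_le_mul_of_nonneg_right _ (hpnn k)
      calc x ^ k ≤ x ^ 1 := pow_le_pow_of_le_one hx0.le hx1.le hk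
        _ = x := pow_one x
  have hlt : x ^ k₀ * p k₀ < x * p k₀ := by
    apply mul_lt_mul_of_pos_right _ hpk
    calc x ^ k₀ ≤ x ^ 2 := pow_le_pow_of_le_one hx0.le hx1.le hk2
      _ < x ^ 1 := pow_lt_pow_right_of_lt_one₀ hx0 hx1 (by norm_num)
      _ = x := pow_one x
  calc h x = ∑' k : ℕ, x ^ k * p k := hh x
    _ < ∑' k : ℕ, x * p k := Summable.tsum_lt_tsum hle hlt hsg hsf
    _ = x * ∑' k : ℕ, p k := tsum_mul_left
    _ = x := by rw [hsum, mul_one]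

lemma aux_int (h : ℝ → ℝ) (C : ℝ) (hC : 0 < C)
    (hmain : ∀ u ∈ Set.Ioo (0:ℝ) (1/2),
      (1-u) - h (1-u) ≤ C * (1 + Real.log (1/u)) * u * (1-u))
    (hpos : ∀ x ∈ Set.Ioo (0:ℝ) 1, h x < x) :
    ∀ ε ∈ Set.Ioo (0:ℝ) 1,
      ∫⁻ s in Set.Ioo (1-ε) 1, ENNReal.ofReal (1/|h s - s|) = ⊤ := by
  intro ε hε
  obtain ⟨hε0, hε1⟩ := hε
  set δ : ℝ := min ε (1/2) with hδ_def
  have hδ0 : 0 < δ := lt_min hε0 (by norm_num)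
  have hδε : δ ≤ ε := min_le_left _ _
  have hδ2 : δ ≤ 1/2 := min_le_right _ _
  obtain ⟨N, hN⟩ := exists_nat_gt (Real.log (1/δ))
  have hexpN : Real.exp (-(N:ℝ)) < δ := by
    have h1 : -(N:ℝ) < Real.log δ := by
      rw [one_div, Real.log_inv] at hN
      linarith
    calc Real.exp (-(N:ℝ)) < Real.exp (Real.log δ) := Real.exp_lt_exp.mpr h1
      _ = δ := Real.exp_log hδ0
  set a : ℕ → ℝ := fun n => 1 - Real.exp (-((N:ℝ) + n)) with ha_def
  have ha_mono : StrictMono a := by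
    intro m n hmn
    simp only [ha_def, sub_lt_sub_iff_left]
    apply Real.exp_lt_exp.mpr
    have : (m:ℝ) < n := by exact_mod_cast hmn
    linarith
  have ha_lt1 : ∀ n, a n < 1 := by
    intro n
    simp only [ha_def, sub_lt_self_iff]
    exact Real.exp_pos _
  have ha0 : 1 - δ < a 0 := by
    simp only [ha_def]
    push_cast
    rw [add_zero]
    linarith
  set S : ℕ → Set ℝ := fun n => Set.Ioc (a n) (a (n+1)) with hS_def
  have hSm : ∀ n, MeasurableSet (S n) := fun n => measurableSet_Ioc
  have hSd : Pairwise (Function.onFun Disjoint S) := by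
    intro i j hij
    rcases lt_or_gt_of_ne hij with hlt | hlt
    · apply Set.disjoint_left.mpr
      intro x hx1 hx2
      have h1 : x ≤ a (i+1) := hx1.2
      have h2 : a j < x := hx2.1
      have h3 : a (i+1) ≤ a j := ha_mono.monotone (by omega)
      linarith
    · apply Set.disjoint_left.mpr
      intro x hx1 hx2
      have h1 : x ≤ a (j+1) := hx2.2
      have h2 : a i < x := hx1.1
      have h3 : a (j+1) ≤ a i := ha_mono.monotone (by omega)
      linarith
  have hSsub : (⋃ n, S n) ⊆ Set.Ioo (1-ε) 1 := by
    intro x hx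
    obtain ⟨n, hn⟩ := Set.mem_iUnion.mp hx
    refine ⟨?_, lt_of_le_of_lt hn.2 (ha_lt1 _)⟩
    have : a 0 ≤ a n := ha_mono.monotone (Nat.zero_le n)
    have := hn.1
    linarith
  -- the constant lower bound on each slice
  set B : ℕ → ℝ := fun n => C * ((N:ℝ) + n + 2) * Real.exp (-((N:ℝ) + n)) with hB_def
  have hBpos : ∀ n, 0 < B n := by
    intro n
    have : (0:ℝ) < (N:ℝ) + n + 2 := by positivity
    exact mul_pos (mul_pos hC this) (Real.exp_pos _)
  have hslice : ∀ n, ∀ x ∈ S n, ENNReal.ofReal (1 / B n) ≤ ENNReal.ofReal (1/|h x - x|) := by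
    intro n x hx
    obtain ⟨hx1, hx2⟩ := hx
    set u : ℝ := 1 - x with hu_def
    have hxeq : 1 - u = x := by rw [hu_def]; ring
    have huu : u < Real.exp (-((N:ℝ)+n)) := by
      simp only [ha_def] at hx1
      simp only [hu_def]; linarith
    have hul : Real.exp (-((N:ℝ)+n+1)) ≤ u := by
      have : a (n+1) = 1 - Real.exp (-((N:ℝ)+n+1)) := by
        simp only [ha_def]; push_cast; ring_nf
      rw [this] at hx2
      simp only [hu_def]; linarith
    have hu0 : 0 < u := lt_of_lt_of_le (Real.exp_pos _) hul
    have huδ : u < δ := by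
      have : Real.exp (-((N:ℝ)+n)) ≤ Real.exp (-(N:ℝ)) :=
        Real.exp_le_exp.mpr (by push_cast; linarith [Nat.cast_nonneg (α := ℝ) n])
      linarith
    have hu2 : u < 1/2 := lt_of_lt_of_le huδ hδ2
    have hx0 : 0 < x := by rw [← hxeq]; linarith
    have hx1' : x < 1 := by rw [← hxeq]; linarith
    have hhx := hpos x ⟨hx0, hx1'⟩
    have habs : |h x - x| = x - h x := by
      rw [abs_of_neg (by linarith)]; ring
    have hub : x - h x ≤ B n := by
      have hb := hmain u ⟨hu0, hu2⟩
      rw [hxeq] at hb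
      have hL : Real.log (1/u) ≤ (N:ℝ) + n + 1 := by
        have h1 : 1/u ≤ Real.exp ((N:ℝ)+n+1) := by
          rw [div_le_iff₀ hu0]
          calc (1:ℝ) = Real.exp (-((N:ℝ)+n+1)) * Real.exp ((N:ℝ)+n+1) := by
                rw [← Real.exp_add, show -((N:ℝ)+n+1) + ((N:ℝ)+n+1) = 0 by ring, Real.exp_zero]
            _ ≤ u * Real.exp ((N:ℝ)+n+1) := by
                apply mul_le_mul_of_nonneg_right hul (Real.exp_pos _).le
            _ = Real.exp ((N:ℝ)+n+1) * u := by ring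
        calc Real.log (1/u) ≤ Real.log (Real.exp ((N:ℝ)+n+1)) :=
              Real.log_le_log (by positivity) h1
          _ = (N:ℝ)+n+1 := Real.log_exp _
      have hL0 : 0 ≤ Real.log (1/u) := Real.log_nonneg (by rw [le_div_iff₀ hu0]; linarith)
      have t1 : C * (1 + Real.log (1/u)) ≤ C * ((N:ℝ) + n + 2) :=
        mul_le_mul_of_nonneg_left (by linarith) hC.le
      have t2 : u * x ≤ Real.exp (-((N:ℝ)+n)) * 1 :=
        mul_le_mul huu.le hx1'.le hx0.le (Real.exp_pos _).le
      calc x - h x ≤ C * (1 + Real.log (1/u)) * u * x := hb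
        _ = (C * (1 + Real.log (1/u))) * (u * x) := by ring
        _ ≤ (C * ((N:ℝ) + n + 2)) * (Real.exp (-((N:ℝ)+n)) * 1) := by
            apply mul_le_mul t1 t2 (mul_nonneg hu0.le hx0.le)
            have : (0:ℝ) < (N:ℝ) + n + 2 := by positivity
            exact (mul_pos hC this).le
        _ = B n := by rw [hB_def]; ring
    apply ENNReal.ofReal_le_ofReal
    rw [habs]
    exact one_div_le_one_div_of_le (by linarith) hub
  -- per-slice integral lower bound
  have hvol : ∀ n, volume (S n) = ENNReal.ofReal (Real.exp (-((N:ℝ)+n)) - Real.exp (-((N:ℝ)+n+1))) := by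
    intro n
    simp only [hS_def]
    rw [Real.volume_Ioc]
    congr 1
    simp only [ha_def]
    push_cast
    ring
  set c : ℝ := (1 - Real.exp (-1)) / C with hc_def
  have hexp1 : Real.exp (-1 : ℝ) < 1 := by
    rw [show (1:ℝ) = Real.exp 0 by simp]
    exact Real.exp_lt_exp.mpr (by norm_num)
  have hc0 : 0 < c := div_pos (by linarith) hC
  have hterm : ∀ n : ℕ, ENNReal.ofReal (c / ((N:ℝ) + n + 2)) ≤ ∫⁻ x in S n, ENNReal.ofReal (1/|h x - x|) := by
    intro n
    have hle := setLIntegral_mono' (μ := volume) (hSm n) (hslice n)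
    rw [setLIntegral_const] at hle
    refine le_trans ?_ hle
    rw [hvol n]
    rw [← ENNReal.ofReal_mul (by positivity)]
    apply ENNReal.ofReal_le_ofReal
    have he : Real.exp (-((N:ℝ)+n+1)) = Real.exp (-((N:ℝ)+n)) * Real.exp (-1:ℝ) := by
      rw [← Real.exp_add]; ring_nf
    rw [he]
    have hBn := hBpos n
    rw [hB_def, hc_def]
    have hE := Real.exp_pos (-((N:ℝ)+n))
    have hNn2 : (0:ℝ) < (N:ℝ) + n + 2 := by positivity
    rw [div_le_iff₀ (by positivity), one_div, mul_comm]
    field_simp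
    exact le_rfl
  -- sum diverges
  have hdiv : ∑' n : ℕ, ENNReal.ofReal (c / ((N:ℝ) + n + 2)) = ⊤ := by
    by_contra hne
    have hs : Summable (fun n : ℕ => (c / ((N:ℝ) + n + 2)).toNNReal) := by
      apply ENNReal.tsum_coe_ne_top_iff_summable.mp
      convert hne using 2
      rfl
    have hs2 : Summable (fun n : ℕ => c / ((N:ℝ) + n + 2)) := by
      have := NNReal.summable_coe.mpr hs
      convert this using 2 with n
      rw [Real.coe_toNNReal _ (by positivity)]
    have hs3 : Summable (fun n : ℕ => 1 / ((n + (N+2) : ℕ) : ℝ)) := by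
      have h1 : Summable (fun n : ℕ => c * (1 / ((N:ℝ) + n + 2))) := by
        convert hs2 using 2 with n
        rw [mul_one_div]
      have h2 := (summable_mul_left_iff (ne_of_gt hc0)).mp h1
      convert h2 using 2 with n
      congr 1
      push_cast
      ring
    have hs4 : Summable (fun n : ℕ => 1 / (n : ℝ)) :=
      (summable_nat_add_iff (N+2)).mp hs3
    exact Real.not_summable_one_div_natCast hs4
  -- assemble
  rw [eq_top_iff]
  calc (⊤:ENNReal) = ∑' n : ℕ, ENNReal.ofReal (c / ((N:ℝ) + n + 2)) := hdiv.symm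
    _ ≤ ∑' n : ℕ, ∫⁻ x in S n, ENNReal.ofReal (1/|h x - x|) := ENNReal.tsum_le_tsum hterm
    _ = ∫⁻ x in ⋃ n, S n, ENNReal.ofReal (1/|h x - x|) :=
        (lintegral_iUnion hSm hSd _).symm
    _ ≤ ∫⁻ x in Set.Ioo (1-ε) 1, ENNReal.ofReal (1/|h x - x|) := lintegral_mono_set hSsub

end auxstmt3

theorem stmt3 (p : ℕ → ℝ) (hp0 : p 0 = 0) (hpnn : ∀ k, 0 ≤ p k)
    (hsum : ∑' k, p k = 1)
    (h : ℝ → ℝ) (hh : ∀ s, h s = ∑' k, s ^ k * p k)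
    (p₀ : ℝ) (hp₀ : 0 < p₀)
    (hlim : Tendsto (fun k : ℕ => (k:ℝ)^2 * p k) atTop (nhds p₀)) :
    (∃ C > (0:ℝ), ∃ u₀ ∈ Set.Ioo (0:ℝ) 1, ∀ u ∈ Set.Ioo (0:ℝ) u₀,
      0 ≤ (1-u) - h (1-u) ∧
      (1-u) - h (1-u) ≤ C * (1 + Real.log (1/u)) * u * (1-u)) ∧
    ∀ ε ∈ Set.Ioo (0:ℝ) 1,
      ∫⁻ s in Set.Ioo (1-ε) 1, ENNReal.ofReal (1/|h s - s|) = ⊤ := by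
  -- extract the bound M
  obtain ⟨N, hN⟩ := eventually_atTop.mp (hlim.eventually_lt_const (show p₀ < p₀ + 1 by linarith))
  set M : ℝ := max 1 (p₀ + 1 + ∑ k ∈ Finset.range N, (k:ℝ)^2 * p k) with hM_def
  have hsum_nn : 0 ≤ ∑ k ∈ Finset.range N, (k:ℝ)^2 * p k :=
    Finset.sum_nonneg fun k _ => mul_nonneg (by positivity) (hpnn k)
  have hM1 : 1 ≤ M := le_max_left _ _
  have hMb : ∀ k : ℕ, (k:ℝ)^2 * p k ≤ M := by
    intro k
    rcases le_or_gt N k with hk | hk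
    · calc (k:ℝ)^2 * p k ≤ p₀ + 1 := (hN k hk).le
        _ ≤ p₀ + 1 + ∑ k ∈ Finset.range N, (k:ℝ)^2 * p k := by linarith
        _ ≤ M := le_max_right _ _
    · calc (k:ℝ)^2 * p k ≤ ∑ j ∈ Finset.range N, (j:ℝ)^2 * p j :=
          Finset.single_le_sum (f := fun j : ℕ => (j:ℝ)^2 * p j)
            (fun j _ => mul_nonneg (by positivity) (hpnn j))
            (Finset.mem_range.mpr hk)
        _ ≤ p₀ + 1 + ∑ k ∈ Finset.range N, (k:ℝ)^2 * p k := by linarith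
        _ ≤ M := le_max_right _ _
  -- extract k₀ with p k₀ > 0
  obtain ⟨N₂, hN₂⟩ := eventually_atTop.mp (hlim.eventually_const_lt (show p₀/2 < p₀ by linarith))
  set k₀ : ℕ := max N₂ 2 with hk₀_def
  have hk₀2 : 2 ≤ k₀ := le_max_right _ _
  have hpk₀ : 0 < p k₀ := by
    have h1 : p₀/2 < (k₀:ℝ)^2 * p k₀ := hN₂ k₀ (le_max_left _ _)
    by_contra hc
    push_neg at hc
    have h2 : (k₀:ℝ)^2 * p k₀ ≤ 0 := mul_nonpos_of_nonneg_of_nonpos (by positivity) hc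
    linarith
  set C : ℝ := M * (2 + Real.log 2) with hC_def
  have hlog2 : (0:ℝ) ≤ Real.log 2 := Real.log_nonneg (by norm_num)
  have hC0 : 0 < C := mul_pos (by linarith) (by linarith)
  have hmain := aux_main p hp0 hpnn hsum h hh M hM1 hMb
  have hpos := aux_pos p hp0 hpnn hsum h hh k₀ hk₀2 hpk₀
  constructor
  · exact ⟨C, hC0, 1/2, by norm_num, hmain⟩
  · exact aux_int h C hC0 (fun u hu => (hmain u hu).2) hpos
end

section
/- Let (p_k)_{k≥1} be a probability distribution on positive integers with lim_{k→∞} k² p_k = p₀ > 0, let b, c, d > 0, and set n* = b·p₀/c. Let (b_K)_{K≥1} be a sequence of positive integers with log(b_K)/log(K) → γ ∈ (0,∞) as K → ∞. Then (1/(c·log K))·(b·Σ_{k=1}^{b_K} k·p_k - d) converges to γ·n* as K → ∞. -/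
open Real Set Filter

private lemma sum_Icc_div_log_tendsto (p : ℕ → ℝ) (hp0 : p 0 = 0) (p₀ : ℝ)
    (hlim : Tendsto (fun k : ℕ => (k:ℝ)^2 * p k) atTop (nhds p₀)) :
    Tendsto (fun n : ℕ => (∑ k ∈ Finset.Icc 1 n, (k:ℝ) * p k) / Real.log n)
      atTop (nhds p₀) := by
  set e : ℕ → ℝ := fun k => ((k:ℝ)^2 * p k - p₀) * (k:ℝ)⁻¹ with he_def
  set g : ℕ → ℝ := fun k => (k:ℝ)⁻¹ with hg_def
  have hdecomp : ∀ k : ℕ, (k:ℝ) * p k = e k + p₀ * g k := by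
    intro k
    rcases Nat.eq_zero_or_pos k with rfl | hk
    · simp [he_def, hg_def, hp0]
    · have hk' : (k:ℝ) ≠ 0 := Nat.cast_ne_zero.mpr hk.ne'
      simp only [he_def, hg_def]
      field_simp
      ring
  have he : e =o[atTop] g := by
    have h1 : (fun k : ℕ => (k:ℝ)^2 * p k - p₀) =o[atTop] (fun _ : ℕ => (1:ℝ)) :=
      (Asymptotics.isLittleO_one_iff ℝ).2 (by simpa using hlim.sub_const p₀)
    simpa using h1.mul_isBigO (Asymptotics.isBigO_refl g atTop)
  have hgsum : Tendsto (fun n : ℕ => ∑ i ∈ Finset.range n, g i) atTop atTop := by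
    rw [← not_summable_iff_tendsto_nat_atTop_of_nonneg (fun i => by positivity)]
    exact Real.not_summable_natCast_inv
  have hT : (fun n : ℕ => ∑ i ∈ Finset.range n, e i)
      =o[atTop] (fun n : ℕ => ∑ i ∈ Finset.range n, g i) :=
    he.sum_range (fun i => by positivity) hgsum
  -- convert range (n+1) sums to Icc 1 n sums
  have hIccE : ∀ n : ℕ, ∑ i ∈ Finset.range (n+1), e i = ∑ k ∈ Finset.Icc 1 n, e k := by
    intro n
    rw [Finset.range_eq_Ico, Finset.sum_eq_sum_Ico_succ_bot (by omega : 0 < n + 1),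
      Finset.Ico_add_one_right_eq_Icc]
    simp [he_def]
  have hharm : ∀ n : ℕ, ∑ i ∈ Finset.range (n+1), g i = (harmonic n : ℝ) := by
    intro n
    rw [Finset.range_eq_Ico, Finset.sum_eq_sum_Ico_succ_bot (by omega : 0 < n + 1),
      Finset.Ico_add_one_right_eq_Icc, harmonic_eq_sum_Icc]
    push_cast
    simp [hg_def]
  have hTIcc : (fun n : ℕ => ∑ k ∈ Finset.Icc 1 n, e k)
      =o[atTop] (fun n : ℕ => (harmonic n : ℝ)) := by
    have := hT.comp_tendsto (tendsto_add_atTop_nat 1)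
    simp only [Function.comp_def] at this
    refine this.congr (fun n => hIccE n) (fun n => hharm n)
  have hH : Tendsto (fun n : ℕ => (harmonic n : ℝ) / Real.log n) atTop (nhds 1) := by
    have h1 : Tendsto (fun n : ℕ => ((harmonic n : ℝ) - Real.log n) * (Real.log n)⁻¹ + 1)
        atTop (nhds (Real.eulerMascheroniConstant * 0 + 1)) := by
      exact (Real.tendsto_harmonic_sub_log.mul
        (tendsto_inv_atTop_zero.comp
          (Real.tendsto_log_atTop.comp tendsto_natCast_atTop_atTop))).add tendsto_const_nhds
    rw [mul_zero, zero_add] at h1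
    apply h1.congr'
    filter_upwards [eventually_ge_atTop 2] with n hn
    have hlog : Real.log n ≠ 0 := by
      have : (1:ℝ) < n := by exact_mod_cast hn
      exact (Real.log_pos this).ne'
    field_simp
    ring
  have hzero : Tendsto (fun n : ℕ => (∑ k ∈ Finset.Icc 1 n, e k) / Real.log n)
      atTop (nhds 0) := by
    have h2 : Tendsto (fun n : ℕ =>
        ((∑ k ∈ Finset.Icc 1 n, e k) / (harmonic n : ℝ)) * ((harmonic n : ℝ) / Real.log n))
        atTop (nhds (0 * 1)) := hTIcc.tendsto_div_nhds_zero.mul hH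
    rw [zero_mul] at h2
    apply h2.congr'
    filter_upwards [eventually_ge_atTop 1] with n hn
    have hpos : (harmonic n : ℝ) ≠ 0 := by
      exact_mod_cast (harmonic_pos (by omega)).ne'
    rw [div_mul_div_comm, mul_comm ((harmonic n : ℝ)), ← div_mul_div_comm,
      div_self hpos, mul_one]
  have hfinal : Tendsto (fun n : ℕ =>
      (∑ k ∈ Finset.Icc 1 n, e k) / Real.log n + p₀ * ((harmonic n : ℝ) / Real.log n))
      atTop (nhds (0 + p₀ * 1)) := hzero.add (hH.const_mul p₀)
  rw [zero_add, mul_one] at hfinal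
  apply hfinal.congr
  intro n
  have : ∑ k ∈ Finset.Icc 1 n, (k:ℝ) * p k
      = ∑ k ∈ Finset.Icc 1 n, e k + p₀ * (harmonic n : ℝ) := by
    rw [← hharm n, Finset.range_eq_Ico, Finset.sum_eq_sum_Ico_succ_bot (by omega : 0 < n + 1),
      Finset.Ico_add_one_right_eq_Icc]
    simp only [hg_def, Nat.cast_zero, inv_zero, zero_add]
    rw [Finset.mul_sum, ← Finset.sum_add_distrib]
    exact Finset.sum_congr rfl fun k _ => hdecomp k
  rw [this, add_div, mul_div_assoc]

theorem stmt5 (p : ℕ → ℝ) (hp0 : p 0 = 0) (hpnn : ∀ k, 0 ≤ p k)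
    (hsum : ∑' k, p k = 1)
    (p₀ b c d : ℝ) (hp₀ : 0 < p₀) (hb : 0 < b) (hc : 0 < c) (hd : 0 < d)
    (hlim : Tendsto (fun k : ℕ => (k:ℝ)^2 * p k) atTop (nhds p₀))
    (nstar : ℝ) (hnstar : nstar = b * p₀ / c)
    (bK : ℕ → ℕ) (hbK : ∀ K, 1 ≤ bK K)
    (γ : ℝ) (hγ : 0 < γ)
    (hloglim : Tendsto (fun K : ℕ => Real.log (bK K) / Real.log K) atTop (nhds γ)) :
    Tendsto (fun K : ℕ => (1 / (c * Real.log K)) *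
      (b * ∑ k ∈ Finset.Icc 1 (bK K), (k:ℝ) * p k - d)) atTop (nhds (γ * nstar)) := by
  have main := sum_Icc_div_log_tendsto p hp0 p₀ hlim
  set S : ℕ → ℝ := fun n => ∑ k ∈ Finset.Icc 1 n, (k:ℝ) * p k with hS_def
  -- log (bK K) → ∞
  have hlogbK : Tendsto (fun K : ℕ => Real.log (bK K)) atTop atTop := by
    have h1 : Tendsto (fun K : ℕ => (Real.log (bK K) / Real.log K) * Real.log K)
        atTop atTop :=
      Filter.Tendsto.pos_mul_atTop hγ hloglim (Real.tendsto_log_atTop.comp tendsto_natCast_atTop_atTop)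
    apply h1.congr'
    filter_upwards [eventually_ge_atTop 2] with K hK
    have hlog : Real.log K ≠ 0 := by
      have : (1:ℝ) < K := by exact_mod_cast hK
      exact (Real.log_pos this).ne'
    rw [div_mul_cancel₀ _ hlog]
  -- bK → ∞
  have hbKatTop : Tendsto bK atTop atTop := by
    rw [← tendsto_natCast_atTop_iff (R := ℝ)]
    apply tendsto_atTop_mono (fun K => ?_) hlogbK
    have hpos : (0:ℝ) < (bK K : ℝ) := by exact_mod_cast hbK K
    linarith [Real.log_le_sub_one_of_pos hpos]
  have comp : Tendsto (fun K : ℕ => S (bK K) / Real.log (bK K)) atTop (nhds p₀) :=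
    main.comp hbKatTop
  have combined : Tendsto (fun K : ℕ => S (bK K) / Real.log K) atTop (nhds (p₀ * γ)) := by
    have h2 := comp.mul hloglim
    apply h2.congr'
    filter_upwards [hbKatTop.eventually (eventually_ge_atTop 2)] with K hK
    have hlog : Real.log (bK K) ≠ 0 := by
      have : (1:ℝ) < (bK K : ℝ) := by exact_mod_cast hK
      exact (Real.log_pos this).ne'
    rw [div_mul_div_comm, mul_comm (Real.log (bK K)), ← div_mul_div_comm,
      div_self hlog, mul_one]
  have hinv : Tendsto (fun K : ℕ => (Real.log K)⁻¹) atTop (nhds 0) :=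
    tendsto_inv_atTop_zero.comp (Real.tendsto_log_atTop.comp tendsto_natCast_atTop_atTop)
  have hfinal : Tendsto (fun K : ℕ =>
      (b / c) * (S (bK K) / Real.log K) - (d / c) * (Real.log K)⁻¹)
      atTop (nhds ((b / c) * (p₀ * γ) - (d / c) * 0)) :=
    (combined.const_mul (b/c)).sub (hinv.const_mul (d/c))
  have hval : (b / c) * (p₀ * γ) - (d / c) * 0 = γ * nstar := by
    rw [hnstar]; field_simp; ring
  rw [hval] at hfinal
  apply hfinal.congr
  intro K
  rcases eq_or_ne (Real.log K) 0 with h | h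
  · simp [h]
  · field_simp
    try ring
end

section
/- Let 𝒳 be a compact metric space, ρ a probability measure on 𝒳, φ : 𝒳 → ℝ continuous, f : ℝ → ℝ twice continuously differentiable with bounded second derivative, and n > 0, y ≥ -1 with n + y > 0. Define Θ_{n,y}F(ρ) = ∫_𝒳 ( f( (n·⟨ρ,φ⟩ + y·φ(x))/(n+y) ) - f(⟨ρ,φ⟩) ) ρ(dx). Then |Θ_{n,y}F(ρ)| ≤ ‖f''‖_∞ · ‖φ‖_∞² · (y/(n+y))². -/
open Real Set MeasureTheory

lemma taylor1_aux (f : ℝ → ℝ) (hf : ContDiff ℝ 2 f) (B : ℝ)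
    (hB : ∀ t, |deriv (deriv f) t| ≤ B) (a h : ℝ) :
    |f (a + h) - f a - deriv f a * h| ≤ B * h ^ 2 := by
  have hBnn : 0 ≤ B := le_trans (abs_nonneg _) (hB 0)
  have hf1 : Differentiable ℝ f := hf.differentiable (by norm_num)
  have hf2 : Differentiable ℝ (deriv f) := by
    have := (contDiff_succ_iff_deriv.mp (by norm_num at hf ⊢; exact hf : ContDiff ℝ (1+1) f)).2
    exact this.2.differentiable (by norm_num)
  -- deriv f is B-Lipschitz
  have hlip : ∀ t : ℝ, |deriv f t - deriv f a| ≤ B * |t - a| := by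
    intro t
    have := Convex.norm_image_sub_le_of_norm_deriv_le
      (f := deriv f) (s := univ) (fun x _ => hf2 x) (fun x _ => hB x) convex_univ
      (mem_univ a) (mem_univ t)
    simpa [Real.norm_eq_abs] using this
  set g : ℝ → ℝ := fun t => f t - deriv f a * t with hg
  have hgd : ∀ t : ℝ, HasDerivAt g (deriv f t - deriv f a) t := by
    intro t
    have h1 : HasDerivAt f (deriv f t) t := (hf1 t).hasDerivAt
    have h2 : HasDerivAt (fun t : ℝ => deriv f a * t) (deriv f a) t := by
      simpa using (hasDerivAt_id t).const_mul (deriv f a)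
    exact h1.sub h2
  have key := Convex.norm_image_sub_le_of_norm_deriv_le (f := g)
      (s := Metric.closedBall a |h|) (C := B * |h|) (x := a) (y := a + h)
      (fun x _ => (hgd x).differentiableAt)
      (fun x hx => by
        rw [(hgd x).deriv]
        have hxa : |x - a| ≤ |h| := by
          simpa [Real.dist_eq] using Metric.mem_closedBall.mp hx
        calc ‖deriv f x - deriv f a‖ = |deriv f x - deriv f a| := rfl
          _ ≤ B * |x - a| := hlip x
          _ ≤ B * |h| := by nlinarith [abs_nonneg (x - a)])
      (convex_closedBall a |h|)
      (Metric.mem_closedBall.mpr (by simp [Real.dist_eq]))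
      (Metric.mem_closedBall.mpr (by simp [Real.dist_eq]))
  have hge : g (a + h) - g a = f (a + h) - f a - deriv f a * h := by
    simp only [hg]; ring
  rw [hge, Real.norm_eq_abs] at key
  calc |f (a + h) - f a - deriv f a * h| ≤ B * |h| * ‖a + h - a‖ := key
    _ = B * h ^ 2 := by
        rw [Real.norm_eq_abs, show a + h - a = h by ring, mul_assoc, abs_mul_abs_self]
        ring

theorem stmt7 {X : Type*} [MeasurableSpace X] [MetricSpace X] [CompactSpace X]
    [BorelSpace X]
    (ρ : Measure X) [IsProbabilityMeasure ρ]
    (φ : X → ℝ) (hφ : Continuous φ)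
    (f : ℝ → ℝ) (hf : ContDiff ℝ 2 f)
    (B M : ℝ) (hB : ∀ t, |deriv (deriv f) t| ≤ B) (hM : ∀ x, |φ x| ≤ M)
    (n y : ℝ) (hn : 0 < n) (hy : -1 ≤ y) (hny : 0 < n + y) :
    |∫ x, (f ((n * (∫ z, φ z ∂ρ) + y * φ x) / (n + y)) - f (∫ z, φ z ∂ρ)) ∂ρ|
      ≤ B * M^2 * (y/(n+y))^2 := by
  have hBnn : 0 ≤ B := le_trans (abs_nonneg _) (hB 0)
  set m : ℝ := ∫ z, φ z ∂ρ with hm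
  set c : ℝ := y / (n + y) with hc
  have hrw : ∀ x, (n * m + y * φ x) / (n + y) = m + c * (φ x - m) := by
    intro x
    rw [hc, div_eq_iff hny.ne']
    have hq : y / (n + y) * (n + y) = y := div_mul_cancel₀ y hny.ne'
    linear_combination -(φ x - m) * hq
  -- integrability
  have hφi : Integrable φ ρ := by
    refine (integrable_const M).mono' hφ.aestronglyMeasurable ?_
    exact Filter.Eventually.of_forall fun x => by simpa [Real.norm_eq_abs] using hM x
  have hφm : Integrable (fun x => φ x - m) ρ := hφi.sub (integrable_const m)
  have hsqi : Integrable (fun x => (φ x - m) ^ 2) ρ := by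
    refine (integrable_const ((M + |m|) ^ 2)).mono'
      ((hφ.sub continuous_const).pow 2).aestronglyMeasurable ?_
    refine Filter.Eventually.of_forall fun x => ?_
    have h1 : |φ x - m| ≤ M + |m| := (abs_sub _ _).trans (by gcongr; exact hM x)
    have h2 : ‖(φ x - m) ^ 2‖ = |φ x - m| ^ 2 := by
      simp [Real.norm_eq_abs, abs_pow, sq_abs]
    rw [h2]
    have : 0 ≤ |φ x - m| := abs_nonneg _
    nlinarith
  have hAi : Integrable (fun x => f (m + c * (φ x - m)) - f m) ρ := by
    refine (integrable_const (B * (c * (M + |m|)) ^ 2 + |deriv f m * c| * (M + |m|))).mono'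
      (((hf.continuous.comp (by continuity)).sub continuous_const)).aestronglyMeasurable ?_
    refine Filter.Eventually.of_forall fun x => ?_
    have htay := taylor1_aux f hf B hB m (c * (φ x - m))
    have h1 : |φ x - m| ≤ M + |m| := (abs_sub _ _).trans (by gcongr; exact hM x)
    have habs : |f (m + c * (φ x - m)) - f m| ≤
        B * (c * (φ x - m)) ^ 2 + |deriv f m * (c * (φ x - m))| := by
      have := abs_sub_abs_le_abs_sub (f (m + c * (φ x - m)) - f m)
        (deriv f m * (c * (φ x - m)))
      calc |f (m + c * (φ x - m)) - f m|
          ≤ |f (m + c * (φ x - m)) - f m - deriv f m * (c * (φ x - m))|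
            + |deriv f m * (c * (φ x - m))| := by
            have := abs_add_le (f (m + c * (φ x - m)) - f m - deriv f m * (c * (φ x - m)))
              (deriv f m * (c * (φ x - m)))
            simpa using this
        _ ≤ B * (c * (φ x - m)) ^ 2 + |deriv f m * (c * (φ x - m))| := by gcongr
    rw [Real.norm_eq_abs]
    refine habs.trans ?_
    have e1 : (c * (φ x - m)) ^ 2 ≤ (c * (M + |m|)) ^ 2 := by
      rw [mul_pow, mul_pow]
      have : (φ x - m) ^ 2 ≤ (M + |m|) ^ 2 := by
        rw [← sq_abs (φ x - m)]; nlinarith [abs_nonneg (φ x - m)]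
      nlinarith [sq_nonneg c]
    have e2 : |deriv f m * (c * (φ x - m))| ≤ |deriv f m * c| * (M + |m|) := by
      rw [← mul_assoc, abs_mul]
      exact mul_le_mul_of_nonneg_left h1 (abs_nonneg _)
    nlinarith
  -- the linear term integrates to zero
  have h0 : ∫ x, (φ x - m) ∂ρ = 0 := by
    rw [integral_sub hφi (integrable_const m)]
    simp [hm]
  have hLi : Integrable (fun x => deriv f m * (c * (φ x - m))) ρ := by
    simpa [mul_assoc] using (hφm.const_mul (deriv f m * c))
  -- rewrite the integral
  have heq : ∫ x, (f ((n * m + y * φ x) / (n + y)) - f m) ∂ρ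
      = ∫ x, (f (m + c * (φ x - m)) - f m - deriv f m * (c * (φ x - m))) ∂ρ := by
    rw [integral_sub hAi hLi]
    have : ∫ x, deriv f m * (c * (φ x - m)) ∂ρ = 0 := by
      rw [integral_const_mul, integral_const_mul, h0, mul_zero, mul_zero]
    rw [this, sub_zero]
    congr 1
    ext x
    rw [hrw x]
  rw [heq]
  -- bound
  have hbound : |∫ x, (f (m + c * (φ x - m)) - f m - deriv f m * (c * (φ x - m))) ∂ρ|
      ≤ ∫ x, B * c ^ 2 * (φ x - m) ^ 2 ∂ρ := by
    have := norm_integral_le_integral_norm (μ := ρ)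
      (f := fun x => f (m + c * (φ x - m)) - f m - deriv f m * (c * (φ x - m)))
    simp only [Real.norm_eq_abs] at this
    refine this.trans ?_
    refine integral_mono_of_nonneg (Filter.Eventually.of_forall fun x => abs_nonneg _)
      ((hsqi.const_mul _)) (Filter.Eventually.of_forall fun x => ?_)
    have := taylor1_aux f hf B hB m (c * (φ x - m))
    calc |f (m + c * (φ x - m)) - f m - deriv f m * (c * (φ x - m))|
        ≤ B * (c * (φ x - m)) ^ 2 := this
      _ = B * c ^ 2 * (φ x - m) ^ 2 := by ring
  refine hbound.trans ?_
  have hvar : ∫ x, (φ x - m) ^ 2 ∂ρ ≤ M ^ 2 := by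
    have hφ2 : Integrable (fun x => φ x ^ 2) ρ := by
      have : (fun x => φ x ^ 2) = fun x => (φ x - m) ^ 2 + (2 * m) * φ x - m ^ 2 := by
        ext x; ring
      rw [this]
      exact (hsqi.add (hφi.const_mul _)).sub (integrable_const _)
    have hexp : ∫ x, (φ x - m) ^ 2 ∂ρ = (∫ x, φ x ^ 2 ∂ρ) - m ^ 2 := by
      have : (fun x => (φ x - m) ^ 2) = fun x => φ x ^ 2 - (2 * m) * φ x + m ^ 2 := by
        ext x; ring
      have i1 : Integrable (fun x => φ x ^ 2 - 2 * m * φ x) ρ :=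
        hφ2.sub (hφi.const_mul (2 * m))
      rw [this, integral_add i1 (integrable_const (m ^ 2)),
        integral_sub hφ2 (hφi.const_mul (2 * m)), integral_const_mul]
      simp [hm]
      ring
    rw [hexp]
    have h1 : ∫ x, φ x ^ 2 ∂ρ ≤ M ^ 2 := by
      calc ∫ x, φ x ^ 2 ∂ρ ≤ ∫ _x, M ^ 2 ∂ρ := by
            refine integral_mono hφ2 (integrable_const _) fun x => ?_
            rw [← sq_abs (φ x)]
            nlinarith [abs_nonneg (φ x), hM x]
        _ = M ^ 2 := by simp
    nlinarith [sq_nonneg m]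
  rw [integral_const_mul]
  calc B * c ^ 2 * ∫ x, (φ x - m) ^ 2 ∂ρ ≤ B * c ^ 2 * M ^ 2 :=
        mul_le_mul_of_nonneg_left hvar (mul_nonneg hBnn (sq_nonneg c))
    _ = B * M ^ 2 * c ^ 2 := by ring
end
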